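/- Let n ≥ 1, let s be an n-bit string, let A be a set of n-bit strings with |A| = 2^q, let e : A → ZMod 2 be noise bits, and let ψ be the associated noisy quantum sample state. Then the probability of measuring k* = 1 after the Walsh–Hadamard transform equals exactly 1/2; that is, ∑_{𝐤 over all n-bit strings} |(W_{n+1} ψ)(𝐤, 1)|² = 1/2, regardless of the noise bits e. -/

import Mathlib

open scoped BigOperators

/-- `χ(x) = (-1)^x` for a bit `x ∈ ZMod 2`. -/
noncomputable def chi (x : ZMod 2) : ℂ := (-1 : ℂ) ^ x.val

/-- The `(n+1)`-bit Walsh–Hadamard transform, where an `(n+1)`-bit string is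
identified with a pair of an `n`-bit string and a bit, and the dot product of
`(a, b)` and `(𝐤, k⋆)` is `a·𝐤 + b·k⋆`. -/
noncomputable def WH (n : ℕ) (f : ((Fin n → ZMod 2) × ZMod 2) → ℂ)
    (k : (Fin n → ZMod 2) × ZMod 2) : ℂ :=
  ((Real.sqrt (2 ^ (n + 1)) : ℝ) : ℂ)⁻¹ *
    ∑ j : (Fin n → ZMod 2) × ZMod 2,
      chi ((∑ i, j.1 i * k.1 i) + j.2 * k.2) * f j

lemma zmod2_cases : ∀ x : ZMod 2, x = 0 ∨ x = 1 := by decide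

lemma zmod2_add_eq_zero : ∀ x y : ZMod 2, x + y = 0 ↔ y = x := by decide

lemma zmod2_add_self : ∀ x : ZMod 2, x + x = 0 := by decide

lemma chi_eq (x : ZMod 2) : chi x = if x = 0 then 1 else -1 := by
  rcases zmod2_cases x with h | h <;> subst h <;>
    norm_num [chi, ZMod.val_one, ZMod.val_zero]

lemma chi_zero : chi 0 = 1 := by simp [chi_eq]

lemma chi_add (x y : ZMod 2) : chi (x + y) = chi x * chi y := by
  rcases zmod2_cases x with h | h <;> rcases zmod2_cases y with h' | h' <;>
    subst h <;> subst h' <;> norm_num [chi_eq] <;> decide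

lemma conj_chi (x : ZMod 2) : (starRingEnd ℂ) (chi x) = chi x := by
  rw [chi_eq]; split <;> simp

lemma sum_chi_single (v : ZMod 2) :
    ∑ b : ZMod 2, chi (v * b) = if v = 0 then 2 else 0 := by
  rcases zmod2_cases v with h | h <;> subst h <;>
    rw [show (Finset.univ : Finset (ZMod 2)) = {0, 1} by decide] <;>
    norm_num [chi_eq]

lemma chi_finsum {ι : Type*} (s : Finset ι) (f : ι → ZMod 2) :
    chi (∑ i ∈ s, f i) = ∏ i ∈ s, chi (f i) := by
  classical
  induction s using Finset.induction with
  | empty => simp [chi_zero]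
  | insert _ _ h ih => rw [Finset.sum_insert h, Finset.prod_insert h, chi_add, ih]

lemma sum_chi (n : ℕ) (v : Fin n → ZMod 2) :
    ∑ k : Fin n → ZMod 2, chi (∑ i, v i * k i) =
      if v = 0 then (2 : ℂ) ^ n else 0 := by
  classical
  have h : ∀ k : Fin n → ZMod 2, chi (∑ i, v i * k i) = ∏ i, chi (v i * k i) :=
    fun k => chi_finsum _ _
  simp_rw [h]
  rw [← Fintype.prod_sum fun i b => chi (v i * b)]
  simp_rw [sum_chi_single]
  by_cases hv : v = 0
  · subst hv; simp
  · rw [if_neg hv]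
    obtain ⟨i, hi⟩ := Function.ne_iff.mp hv
    exact Finset.prod_eq_zero (Finset.mem_univ i) (by simpa using hi)

theorem measure_kstar_one_probability (n q : ℕ) (hn : 1 ≤ n) (hq : q ≤ n)
    (s : Fin n → ZMod 2) (A : Finset (Fin n → ZMod 2)) (hA : A.card = 2 ^ q)
    (e : (Fin n → ZMod 2) → ZMod 2)
    (ψ : ((Fin n → ZMod 2) × ZMod 2) → ℂ)
    (hψ : ∀ a b, ψ (a, b) =
      if a ∈ A ∧ b = (∑ i, a i * s i) + e a then
        ((Real.sqrt (2 ^ q) : ℝ) : ℂ)⁻¹ else 0) :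
    ∑ k : Fin n → ZMod 2, ‖WH n ψ (k, 1)‖ ^ 2 = 1 / 2 := by
  classical
  set T : (Fin n → ZMod 2) → ZMod 2 := fun a => (∑ i, a i * s i) + e a with hT
  set c : ℝ := (Real.sqrt (2 ^ (n + 1)))⁻¹ with hc
  set d : ℝ := (Real.sqrt (2 ^ q))⁻¹ with hd
  set S : (Fin n → ZMod 2) → ℂ :=
    fun k => ∑ a ∈ A, chi ((∑ i, a i * k i) + T a) with hS
  -- Step A : WH formula
  have hWH : ∀ k : Fin n → ZMod 2, WH n ψ (k, 1) = ((c * d : ℝ) : ℂ) * S k := by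
    intro k
    rw [WH, Fintype.sum_prod_type]
    have inner : ∀ a : Fin n → ZMod 2,
        (∑ b : ZMod 2, chi ((∑ i, a i * k i) + b * 1) * ψ (a, b)) =
          if a ∈ A then chi ((∑ i, a i * k i) + T a) * (d : ℂ) else 0 := by
      intro a
      by_cases hAa : a ∈ A
      · rw [if_pos hAa]
        have hstep : ∀ b : ZMod 2, chi ((∑ i, a i * k i) + b * 1) * ψ (a, b) =
            if b = T a then chi ((∑ i, a i * k i) + b) * (d : ℂ) else 0 := by
          intro b
          rw [hψ a b, mul_one]
          by_cases hb : b = T a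
          · simp [hb, hAa, hd, hT]
          · simp only [hT] at hb; simp [hb, hT]
        simp_rw [hstep]
        rw [Finset.sum_ite_eq' Finset.univ (T a)
          (fun b => chi ((∑ i, a i * k i) + b) * (d : ℂ))]
        simp
      · rw [if_neg hAa]
        refine Finset.sum_eq_zero fun b _ => ?_
        rw [hψ a b]
        simp [hAa]
    simp_rw [inner]
    rw [Finset.sum_ite_mem, Finset.univ_inter, hS]
    push_cast
    rw [Finset.mul_sum, Finset.mul_sum]
    exact Finset.sum_congr rfl fun a _ => by rw [Complex.ofReal_inv, Complex.ofReal_inv]; ring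
  -- Step B : the sum of |S k|^2
  have key : ∑ k : Fin n → ZMod 2, ‖S k‖ ^ 2 = 2 ^ (n + q) := by
    have h1 : ((∑ k : Fin n → ZMod 2, ‖S k‖ ^ 2 : ℝ) : ℂ) =
        ∑ k : Fin n → ZMod 2, S k * (starRingEnd ℂ) (S k) := by
      push_cast
      refine Finset.sum_congr rfl fun k _ => ?_
      rw [Complex.mul_conj, Complex.normSq_eq_norm_sq]
      norm_cast
    have hconj : ∀ k, (starRingEnd ℂ) (S k) = S k := by
      intro k
      rw [hS, map_sum]
      exact Finset.sum_congr rfl fun a _ => conj_chi _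
    have h2 : ∑ k : Fin n → ZMod 2, S k * (starRingEnd ℂ) (S k) =
        (2 : ℂ) ^ (n + q) := by
      simp_rw [hconj, hS, Finset.sum_mul_sum]
      rw [show (∑ k : Fin n → ZMod 2, ∑ a ∈ A, ∑ a' ∈ A,
            chi ((∑ i, a i * k i) + T a) * chi ((∑ i, a' i * k i) + T a')) =
          ∑ a ∈ A, ∑ a' ∈ A, ∑ k : Fin n → ZMod 2,
            chi ((∑ i, a i * k i) + T a) * chi ((∑ i, a' i * k i) + T a') by
        rw [Finset.sum_comm]
        exact Finset.sum_congr rfl fun a _ => Finset.sum_comm]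
      have h3 : ∀ a a' : Fin n → ZMod 2,
          (∑ k : Fin n → ZMod 2,
            chi ((∑ i, a i * k i) + T a) * chi ((∑ i, a' i * k i) + T a')) =
          chi (T a + T a') * (if a' = a then (2 : ℂ) ^ n else 0) := by
        intro a a'
        have hterm : ∀ k : Fin n → ZMod 2,
            chi ((∑ i, a i * k i) + T a) * chi ((∑ i, a' i * k i) + T a') =
              chi (∑ i, (a + a') i * k i) * chi (T a + T a') := by
          intro k
          rw [← chi_add, ← chi_add]
          congr 1
          have hsplit : ∑ i, (a + a') i * k i =
              (∑ i, a i * k i) + ∑ i, a' i * k i := by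
            rw [← Finset.sum_add_distrib]
            exact Finset.sum_congr rfl fun i _ => by simp [add_mul]
          rw [hsplit]; ring
        simp_rw [hterm]
        rw [← Finset.sum_mul, sum_chi]
        have hiff : (a + a' = 0) ↔ (a' = a) := by
          constructor
          · intro h
            funext i
            exact (zmod2_add_eq_zero (a i) (a' i)).mp (congrFun h i)
          · intro h; subst h; funext i
            exact zmod2_add_self _
        rw [if_congr hiff rfl rfl]; ring
      simp_rw [h3]
      have h5 : ∀ a ∈ A, (∑ a' ∈ A,
          chi (T a + T a') * (if a' = a then (2 : ℂ) ^ n else 0)) =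
          (2 : ℂ) ^ n := by
        intro a ha
        simp_rw [mul_ite, mul_zero]
        rw [Finset.sum_ite_eq' A a (fun a' => chi (T a + T a') * (2 : ℂ) ^ n),
          if_pos ha, zmod2_add_self, chi_zero, one_mul]
      rw [Finset.sum_congr rfl h5, Finset.sum_const, hA, nsmul_eq_mul]
      push_cast
      rw [pow_add]; ring
    have h4 := h1.trans h2
    have h6 : ((∑ k : Fin n → ZMod 2, ‖S k‖ ^ 2 : ℝ) : ℂ) =
        (((2 : ℝ) ^ (n + q) : ℝ) : ℂ) := by rw [h4]; push_cast; ring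
    exact_mod_cast h6
  -- Step C : conclude
  simp_rw [hWH]
  have habs : ∀ k : Fin n → ZMod 2,
      ‖((c * d : ℝ) : ℂ) * S k‖ ^ 2 =
        (c * d) ^ 2 * ‖S k‖ ^ 2 := by
    intro k
    rw [norm_mul, Complex.norm_real, Real.norm_eq_abs, mul_pow, sq_abs]
  simp_rw [habs]
  rw [← Finset.mul_sum, key]
  rw [mul_pow, hc, hd, inv_pow, inv_pow,
    Real.sq_sqrt (by positivity), Real.sq_sqrt (by positivity)]
  rw [pow_add, pow_add, pow_one]
  have h2n : (2 : ℝ) ^ n ≠ 0 := by positivity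
  have h2q : (2 : ℝ) ^ q ≠ 0 := by positivity
  field_simp
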